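/- Let F = {(l,x,y,0,0) ∈ ℝ⁵ : 2yl - x² - y² ≥ 0, l ≥ 0}, and for t ∈ [0,1] define α(t) = (1,0,t²,t,t³), β(t) = (1,t/2,t³,-t/2,t³), γ(t) = (1,-t/2,t³,-t/2,t³). Suppose δ₁, δ₂, δ₃ : [0,1] → {0}×ℝ⁴ satisfy ‖δᵢ(t)‖ ≤ t³ for all t. Then there is no idempotent linear map P : ℝ⁵ → ℝ⁵ with P(F) = F, P(ℝ⁵) ⊆ span F, and P(α(t)+δ₁(t)) ∈ F, P(β(t)+δ₂(t)) ∈ F, P(γ(t)+δ₃(t)) ∈ F for all t ∈ [0,1]. -/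

import Mathlib

open Filter Topology


open Filter Topology

lemma eadd (a b : EuclideanSpace ℝ (Fin 5)) (i : Fin 5) : (a + b) i = a i + b i := rfl
lemma esub (a b : EuclideanSpace ℝ (Fin 5)) (i : Fin 5) : (a - b) i = a i - b i := rfl
lemma esmul (c : ℝ) (a : EuclideanSpace ℝ (Fin 5)) (i : Fin 5) : (c • a) i = c * a i := rfl

lemma coord_abs_le (v : EuclideanSpace ℝ (Fin 5)) (i : Fin 5) : |v i| ≤ ‖v‖ := by
  rw [EuclideanSpace.norm_eq]
  have h1 : |v i| = Real.sqrt (‖v i‖ ^ 2) := by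
    rw [Real.sqrt_sq_eq_abs]; simp [abs_abs]
  rw [h1]
  apply Real.sqrt_le_sqrt
  exact Finset.single_le_sum (f := fun j => ‖v j‖ ^ 2) (fun j _ => by positivity)
    (Finset.mem_univ i)

lemma decomp5 (v : EuclideanSpace ℝ (Fin 5)) :
    v = v 0 • (!₂[1,0,0,0,0] : EuclideanSpace ℝ (Fin 5)) + v 1 • !₂[0,1,0,0,0]
      + v 2 • !₂[0,0,1,0,0] + v 3 • !₂[0,0,0,1,0] + v 4 • !₂[0,0,0,0,1] := by
  ext i
  rw [eadd, eadd, eadd, eadd, esmul, esmul, esmul, esmul, esmul]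
  fin_cases i <;> norm_num <;> rfl

lemma tlim : Tendsto (fun t : ℝ => t) (𝓝[>] (0:ℝ)) (𝓝 0) :=
  tendsto_id.mono_left nhdsWithin_le_nhds

lemma dlim (d : ℝ → ℝ) (hd : ∀ t ∈ Set.Icc (0:ℝ) 1, |d t| ≤ t ^ 3) (k : ℕ) (hk : k < 3) :
    Tendsto (fun t => d t / t ^ k) (𝓝[>] (0:ℝ)) (𝓝 0) := by
  apply squeeze_zero_norm' (a := fun t : ℝ => t ^ (3 - k))
  · filter_upwards [Ioc_mem_nhdsGT_of_mem (Set.mem_Ico.2 ⟨le_refl 0, zero_lt_one⟩)] with t ht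
    have h1 : |d t| ≤ t ^ 3 := hd t ⟨le_of_lt ht.1, ht.2⟩
    rw [Real.norm_eq_abs, abs_div, abs_pow, abs_of_pos ht.1]
    rw [div_le_iff₀ (pow_pos ht.1 k)]
    calc |d t| ≤ t ^ 3 := h1
      _ = t ^ (3 - k) * t ^ k := by rw [← pow_add]; congr 1; omega
  · have h : Tendsto (fun t : ℝ => t ^ (3 - k)) (𝓝 0) (𝓝 0) := by
      have := (continuous_pow (3 - k)).tendsto (0:ℝ)
      rwa [zero_pow (by omega : 3 - k ≠ 0)] at this
    exact h.mono_left nhdsWithin_le_nhds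

lemma stage1 (x y l : ℝ → ℝ) (X Y : ℝ)
    (hl : Tendsto l (𝓝[>] (0:ℝ)) (𝓝 1))
    (hx : Tendsto (fun t => x t / t) (𝓝[>] (0:ℝ)) (𝓝 X))
    (hy : Tendsto (fun t => y t / t) (𝓝[>] (0:ℝ)) (𝓝 Y))
    (hpos : ∀ t ∈ Set.Ioc (0:ℝ) 1, 0 ≤ 2 * y t * l t - x t ^ 2 - y t ^ 2) :
    0 ≤ Y := by
  have hQ : Tendsto (fun t => (2 * y t * l t - x t ^ 2 - y t ^ 2) / t) (𝓝[>] (0:ℝ))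
      (𝓝 (2 * Y * 1 - 0 * X ^ 2 - 0 * Y ^ 2)) := by
    have h2 := (((hy.const_mul 2).mul hl).sub (tlim.mul (hx.pow 2))).sub (tlim.mul (hy.pow 2))
    apply h2.congr'
    filter_upwards [self_mem_nhdsWithin] with t ht
    have htne : t ≠ 0 := ne_of_gt ht
    field_simp
    try ring
  have h0 : 0 ≤ 2 * Y * 1 - 0 * X ^ 2 - 0 * Y ^ 2 := by
    refine ge_of_tendsto hQ ?_
    filter_upwards [Ioc_mem_nhdsGT_of_mem (Set.mem_Ico.2 ⟨le_refl 0, zero_lt_one⟩)] with t ht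
    exact div_nonneg (hpos t ht) (le_of_lt ht.1)
  nlinarith [h0]

lemma stage2 (x y l : ℝ → ℝ) (X : ℝ)
    (hl : Tendsto l (𝓝[>] (0:ℝ)) (𝓝 1))
    (hx : Tendsto (fun t => x t / t) (𝓝[>] (0:ℝ)) (𝓝 X))
    (hy2 : Tendsto (fun t => y t / t ^ 2) (𝓝[>] (0:ℝ)) (𝓝 0))
    (hpos : ∀ t ∈ Set.Ioc (0:ℝ) 1, 0 ≤ 2 * y t * l t - x t ^ 2 - y t ^ 2) :
    X = 0 := by
  have hyt : Tendsto (fun t => y t / t) (𝓝[>] (0:ℝ)) (𝓝 0) := by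
    have h2 := hy2.mul tlim
    rw [mul_zero] at h2
    apply h2.congr'
    filter_upwards [self_mem_nhdsWithin] with t ht
    have htne : t ≠ 0 := ne_of_gt ht
    field_simp
    try ring
  have hQ : Tendsto (fun t => (2 * y t * l t - x t ^ 2 - y t ^ 2) / t ^ 2) (𝓝[>] (0:ℝ))
      (𝓝 (2 * 0 * 1 - X ^ 2 - 0 ^ 2)) := by
    have h2 := (((hy2.const_mul 2).mul hl).sub (hx.pow 2)).sub (hyt.pow 2)
    apply h2.congr'
    filter_upwards [self_mem_nhdsWithin] with t ht
    have htne : t ≠ 0 := ne_of_gt ht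
    field_simp
    try ring
  have h0 : 0 ≤ 2 * 0 * 1 - X ^ 2 - 0 ^ 2 := by
    refine ge_of_tendsto hQ ?_
    filter_upwards [Ioc_mem_nhdsGT_of_mem (Set.mem_Ico.2 ⟨le_refl 0, zero_lt_one⟩)] with t ht
    exact div_nonneg (hpos t ht) (by positivity)
  nlinarith [h0]


/-- The cone `F = {(l,x,y,0,0) : 2yl - x² - y² ≥ 0, l ≥ 0}` in coordinates
`(l,x,y,z,s) = (v 0, v 1, v 2, v 3, v 4)`. -/
def Fcone : Set (EuclideanSpace ℝ (Fin 5)) :=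
  {v | 0 ≤ 2 * v 2 * v 0 - (v 1) ^ 2 - (v 2) ^ 2 ∧ 0 ≤ v 0 ∧ v 3 = 0 ∧ v 4 = 0}

/-- The curve `α(t) = (1, 0, t², t, t³)`. -/
noncomputable def curveA (t : ℝ) : EuclideanSpace ℝ (Fin 5) := WithLp.toLp 2 ![1, 0, t ^ 2, t, t ^ 3]

/-- The curve `β(t) = (1, t/2, t³, -t/2, t³)`. -/
noncomputable def curveB (t : ℝ) : EuclideanSpace ℝ (Fin 5) := WithLp.toLp 2 ![1, t / 2, t ^ 3, -(t / 2), t ^ 3]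

/-- The curve `γ(t) = (1, -t/2, t³, -t/2, t³)`. -/
noncomputable def curveC (t : ℝ) : EuclideanSpace ℝ (Fin 5) := WithLp.toLp 2 ![1, -(t / 2), t ^ 3, -(t / 2), t ^ 3]

set_option maxHeartbeats 2000000
/-- Proposition 4.2: with perturbations `δᵢ : [0,1] → {0} × ℝ⁴` satisfying `‖δᵢ(t)‖ ≤ t³`,
there is no idempotent linear `P : ℝ⁵ → ℝ⁵` with `P(F) = F`, `P(ℝ⁵) ⊆ span F = ℝ³×{(0,0)}`,
and `P(α(t)+δ₁(t)), P(β(t)+δ₂(t)), P(γ(t)+δ₃(t)) ∈ F` for all `t ∈ [0,1]`. -/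
theorem stmt13 (δ₁ δ₂ δ₃ : ℝ → EuclideanSpace ℝ (Fin 5))
    (hδ0 : ∀ t ∈ Set.Icc (0 : ℝ) 1, (δ₁ t) 0 = 0 ∧ (δ₂ t) 0 = 0 ∧ (δ₃ t) 0 = 0)
    (hδn : ∀ t ∈ Set.Icc (0 : ℝ) 1, ‖δ₁ t‖ ≤ t ^ 3 ∧ ‖δ₂ t‖ ≤ t ^ 3 ∧ ‖δ₃ t‖ ≤ t ^ 3) :
    ¬ ∃ P : EuclideanSpace ℝ (Fin 5) →ₗ[ℝ] EuclideanSpace ℝ (Fin 5),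
      (∀ v, P (P v) = P v) ∧
      (⇑P '' Fcone = Fcone) ∧
      (∀ v, (P v) 3 = 0 ∧ (P v) 4 = 0) ∧
      (∀ t ∈ Set.Icc (0 : ℝ) 1,
        P (curveA t + δ₁ t) ∈ Fcone ∧ P (curveB t + δ₂ t) ∈ Fcone ∧
        P (curveC t + δ₃ t) ∈ Fcone) := by
  rintro ⟨P, hidem, hPF, hP34, hcur⟩
  have hfix : ∀ v ∈ Fcone, P v = v := by
    intro v hv
    rw [← hPF] at hv
    obtain ⟨w, -, rfl⟩ := hv
    rw [hidem]
  have m1 : (!₂[1,0,0,0,0] : EuclideanSpace ℝ (Fin 5)) ∈ Fcone := by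
    refine ⟨?_, ?_, ?_, ?_⟩ <;> norm_num [Fcone, Matrix.cons_val_two, Matrix.cons_val_three, Matrix.cons_val_four]
  have m2 : (!₂[1,0,1,0,0] : EuclideanSpace ℝ (Fin 5)) ∈ Fcone := by
    refine ⟨?_, ?_, ?_, ?_⟩ <;> norm_num [Fcone, Matrix.cons_val_two, Matrix.cons_val_three, Matrix.cons_val_four]
  have m3 : (!₂[1,1,1,0,0] : EuclideanSpace ℝ (Fin 5)) ∈ Fcone := by
    refine ⟨?_, ?_, ?_, ?_⟩ <;> norm_num [Fcone, Matrix.cons_val_two, Matrix.cons_val_three, Matrix.cons_val_four]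
  have m4 : (!₂[1,-1,1,0,0] : EuclideanSpace ℝ (Fin 5)) ∈ Fcone := by
    refine ⟨?_, ?_, ?_, ?_⟩ <;> norm_num [Fcone, Matrix.cons_val_two, Matrix.cons_val_three, Matrix.cons_val_four]
  have hE0 : P !₂[1,0,0,0,0] = !₂[1,0,0,0,0] := hfix _ m1
  have hE2 : P !₂[0,0,1,0,0] = !₂[0,0,1,0,0] := by
    have e : (!₂[0,0,1,0,0] : EuclideanSpace ℝ (Fin 5)) = !₂[1,0,1,0,0] - !₂[1,0,0,0,0] := by
      ext i; rw [esub]; fin_cases i <;> norm_num <;> rfl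
    rw [e, map_sub, hfix _ m2, hfix _ m1]
  have hE1 : P !₂[0,1,0,0,0] = !₂[0,1,0,0,0] := by
    have e : (!₂[0,1,0,0,0] : EuclideanSpace ℝ (Fin 5))
        = (2⁻¹ : ℝ) • (!₂[1,1,1,0,0] - !₂[1,-1,1,0,0]) := by
      ext i; rw [esmul, esub]; fin_cases i <;> norm_num <;> rfl
    rw [e, map_smul, map_sub, hfix _ m3, hfix _ m4]
  set a : EuclideanSpace ℝ (Fin 5) := P !₂[0,0,0,1,0] with ha
  set b : EuclideanSpace ℝ (Fin 5) := P !₂[0,0,0,0,1] with hb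
  have hkey : ∀ (w : EuclideanSpace ℝ (Fin 5)) (j : Fin 5),
      P w j = w 0 * (!₂[1,0,0,0,0] : EuclideanSpace ℝ (Fin 5)) j + w 1 * (!₂[0,1,0,0,0] : EuclideanSpace ℝ (Fin 5)) j
        + w 2 * (!₂[0,0,1,0,0] : EuclideanSpace ℝ (Fin 5)) j + w 3 * a j + w 4 * b j := by
    intro w j
    conv_lhs => rw [decomp5 w]
    simp only [map_add, map_smul, hE0, hE1, hE2, ← ha, ← hb]
    rw [eadd, eadd, eadd, eadd, esmul, esmul, esmul, esmul, esmul]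
  have hd1 : ∀ j : Fin 5, ∀ t ∈ Set.Icc (0:ℝ) 1, |δ₁ t j| ≤ t ^ 3 :=
    fun j t ht => (coord_abs_le _ j).trans (hδn t ht).1
  have hd2 : ∀ j : Fin 5, ∀ t ∈ Set.Icc (0:ℝ) 1, |δ₂ t j| ≤ t ^ 3 :=
    fun j t ht => (coord_abs_le _ j).trans (hδn t ht).2.1
  have hd3 : ∀ j : Fin 5, ∀ t ∈ Set.Icc (0:ℝ) 1, |δ₃ t j| ≤ t ^ 3 :=
    fun j t ht => (coord_abs_le _ j).trans (hδn t ht).2.2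
  have hIoc : Set.Ioc (0:ℝ) 1 ∈ 𝓝[>] (0:ℝ) :=
    Ioc_mem_nhdsGT_of_mem (Set.mem_Ico.2 ⟨le_refl 0, zero_lt_one⟩)
  have ht2lim : Filter.Tendsto (fun t : ℝ => t ^ 2) (𝓝[>] (0:ℝ)) (𝓝 0) := by
    have := tlim.pow 2
    simpa using this
  -- coordinate formulas for the three curves
  have hfA0 : ∀ t ∈ Set.Icc (0:ℝ) 1, P (curveA t + δ₁ t) 0
      = 1 + (t + δ₁ t 3) * a 0 + (t ^ 3 + δ₁ t 4) * b 0 := by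
    intro t ht
    rw [hkey]
    norm_num [eadd, curveA, (hδ0 t ht).1, Matrix.cons_val_two, Matrix.cons_val_three, Matrix.cons_val_four]
    try ring
  have hfA1 : ∀ t ∈ Set.Icc (0:ℝ) 1, P (curveA t + δ₁ t) 1
      = δ₁ t 1 + (t + δ₁ t 3) * a 1 + (t ^ 3 + δ₁ t 4) * b 1 := by
    intro t ht
    rw [hkey]
    norm_num [eadd, curveA, (hδ0 t ht).1, Matrix.cons_val_two, Matrix.cons_val_three, Matrix.cons_val_four]
    try ring
  have hfA2 : ∀ t ∈ Set.Icc (0:ℝ) 1, P (curveA t + δ₁ t) 2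
      = t ^ 2 + δ₁ t 2 + (t + δ₁ t 3) * a 2 + (t ^ 3 + δ₁ t 4) * b 2 := by
    intro t ht
    rw [hkey]
    norm_num [eadd, curveA, (hδ0 t ht).1, Matrix.cons_val_two, Matrix.cons_val_three, Matrix.cons_val_four]
    try ring
  have hfB0 : ∀ t ∈ Set.Icc (0:ℝ) 1, P (curveB t + δ₂ t) 0
      = 1 + (-(t / 2) + δ₂ t 3) * a 0 + (t ^ 3 + δ₂ t 4) * b 0 := by
    intro t ht
    rw [hkey]
    norm_num [eadd, curveB, (hδ0 t ht).2.1, Matrix.cons_val_two, Matrix.cons_val_three, Matrix.cons_val_four]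
    try ring
  have hfB1 : ∀ t ∈ Set.Icc (0:ℝ) 1, P (curveB t + δ₂ t) 1
      = t / 2 + δ₂ t 1 + (-(t / 2) + δ₂ t 3) * a 1 + (t ^ 3 + δ₂ t 4) * b 1 := by
    intro t ht
    rw [hkey]
    norm_num [eadd, curveB, (hδ0 t ht).2.1, Matrix.cons_val_two, Matrix.cons_val_three, Matrix.cons_val_four]
    try ring
  have hfB2 : ∀ t ∈ Set.Icc (0:ℝ) 1, P (curveB t + δ₂ t) 2
      = t ^ 3 + δ₂ t 2 + (-(t / 2) + δ₂ t 3) * a 2 + (t ^ 3 + δ₂ t 4) * b 2 := by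
    intro t ht
    rw [hkey]
    norm_num [eadd, curveB, (hδ0 t ht).2.1, Matrix.cons_val_two, Matrix.cons_val_three, Matrix.cons_val_four]
    try ring
  have hfC0 : ∀ t ∈ Set.Icc (0:ℝ) 1, P (curveC t + δ₃ t) 0
      = 1 + (-(t / 2) + δ₃ t 3) * a 0 + (t ^ 3 + δ₃ t 4) * b 0 := by
    intro t ht
    rw [hkey]
    norm_num [eadd, curveC, (hδ0 t ht).2.2, Matrix.cons_val_two, Matrix.cons_val_three, Matrix.cons_val_four]
    try ring
  have hfC1 : ∀ t ∈ Set.Icc (0:ℝ) 1, P (curveC t + δ₃ t) 1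
      = -(t / 2) + δ₃ t 1 + (-(t / 2) + δ₃ t 3) * a 1 + (t ^ 3 + δ₃ t 4) * b 1 := by
    intro t ht
    rw [hkey]
    norm_num [eadd, curveC, (hδ0 t ht).2.2, Matrix.cons_val_two, Matrix.cons_val_three, Matrix.cons_val_four]
    try ring
  have hfC2 : ∀ t ∈ Set.Icc (0:ℝ) 1, P (curveC t + δ₃ t) 2
      = t ^ 3 + δ₃ t 2 + (-(t / 2) + δ₃ t 3) * a 2 + (t ^ 3 + δ₃ t 4) * b 2 := by
    intro t ht
    rw [hkey]
    norm_num [eadd, curveC, (hδ0 t ht).2.2, Matrix.cons_val_two, Matrix.cons_val_three, Matrix.cons_val_four]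
    try ring
  -- positivity data
  have hposA : ∀ t ∈ Set.Ioc (0:ℝ) 1,
      0 ≤ 2 * P (curveA t + δ₁ t) 2 * P (curveA t + δ₁ t) 0
        - P (curveA t + δ₁ t) 1 ^ 2 - P (curveA t + δ₁ t) 2 ^ 2 :=
    fun t ht => ((hcur t (Set.Ioc_subset_Icc_self ht)).1).1
  have hposB : ∀ t ∈ Set.Ioc (0:ℝ) 1,
      0 ≤ 2 * P (curveB t + δ₂ t) 2 * P (curveB t + δ₂ t) 0
        - P (curveB t + δ₂ t) 1 ^ 2 - P (curveB t + δ₂ t) 2 ^ 2 :=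
    fun t ht => ((hcur t (Set.Ioc_subset_Icc_self ht)).2.1).1
  have hposC : ∀ t ∈ Set.Ioc (0:ℝ) 1,
      0 ≤ 2 * P (curveC t + δ₃ t) 2 * P (curveC t + δ₃ t) 0
        - P (curveC t + δ₃ t) 1 ^ 2 - P (curveC t + δ₃ t) 2 ^ 2 :=
    fun t ht => ((hcur t (Set.Ioc_subset_Icc_self ht)).2.2).1
  -- limits for curve A
  have hlA : Filter.Tendsto (fun t => P (curveA t + δ₁ t) 0) (𝓝[>] (0:ℝ)) (𝓝 1) := by
    have hraw := (tendsto_const_nhds (x := (1:ℝ)).add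
      ((tlim.add (dlim _ (hd1 3) 0 (by norm_num))).mul_const (a 0))).add
      (((tlim.pow 3).add (dlim _ (hd1 4) 0 (by norm_num))).mul_const (b 0))
    simp only [pow_zero, div_one] at hraw
    have hbig : Filter.Tendsto
        (fun t : ℝ => 1 + (t + δ₁ t 3) * a 0 + (t ^ 3 + δ₁ t 4) * b 0)
        (𝓝[>] (0:ℝ)) (𝓝 1) := by
      convert hraw using 2
      norm_num
    apply hbig.congr'
    filter_upwards [hIoc] with t ht
    rw [hfA0 t (Set.Ioc_subset_Icc_self ht)]
  have hxA : Filter.Tendsto (fun t => P (curveA t + δ₁ t) 1 / t) (𝓝[>] (0:ℝ)) (𝓝 (a 1)) := by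
    have hraw := ((dlim _ (hd1 1) 1 (by norm_num)).add
      ((tendsto_const_nhds (x := (1:ℝ)).add (dlim _ (hd1 3) 1 (by norm_num))).mul_const (a 1))).add
      ((ht2lim.add (dlim _ (hd1 4) 1 (by norm_num))).mul_const (b 1))
    simp only [pow_one] at hraw
    have hbig : Filter.Tendsto
        (fun t : ℝ => δ₁ t 1 / t + (1 + δ₁ t 3 / t) * a 1 + (t ^ 2 + δ₁ t 4 / t) * b 1)
        (𝓝[>] (0:ℝ)) (𝓝 (a 1)) := by
      convert hraw using 2
      norm_num
    apply hbig.congr'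
    filter_upwards [hIoc, self_mem_nhdsWithin] with t ht ht'
    have htne : t ≠ 0 := ne_of_gt (α := ℝ) ht'
    rw [hfA1 t (Set.Ioc_subset_Icc_self ht)]
    field_simp
    try ring
    try tauto
  have hyA : Filter.Tendsto (fun t => P (curveA t + δ₁ t) 2 / t) (𝓝[>] (0:ℝ)) (𝓝 (a 2)) := by
    have hraw := ((tlim.add (dlim _ (hd1 2) 1 (by norm_num))).add
      ((tendsto_const_nhds (x := (1:ℝ)).add (dlim _ (hd1 3) 1 (by norm_num))).mul_const (a 2))).add
      ((ht2lim.add (dlim _ (hd1 4) 1 (by norm_num))).mul_const (b 2))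
    simp only [pow_one] at hraw
    have hbig : Filter.Tendsto
        (fun t : ℝ => (t + δ₁ t 2 / t) + (1 + δ₁ t 3 / t) * a 2 + (t ^ 2 + δ₁ t 4 / t) * b 2)
        (𝓝[>] (0:ℝ)) (𝓝 (a 2)) := by
      convert hraw using 2
      norm_num
    apply hbig.congr'
    filter_upwards [hIoc, self_mem_nhdsWithin] with t ht ht'
    have htne : t ≠ 0 := ne_of_gt (α := ℝ) ht'
    rw [hfA2 t (Set.Ioc_subset_Icc_self ht)]
    field_simp
    try ring
    try tauto
  have ha2nonneg : 0 ≤ a 2 := stage1 _ _ _ (a 1) (a 2) hlA hxA hyA hposA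
  -- limits for curve B
  have hlB : Filter.Tendsto (fun t => P (curveB t + δ₂ t) 0) (𝓝[>] (0:ℝ)) (𝓝 1) := by
    have hraw := (tendsto_const_nhds (x := (1:ℝ)).add
      ((((tlim.div_const 2).neg).add (dlim _ (hd2 3) 0 (by norm_num))).mul_const (a 0))).add
      (((tlim.pow 3).add (dlim _ (hd2 4) 0 (by norm_num))).mul_const (b 0))
    simp only [pow_zero, div_one] at hraw
    have hbig : Filter.Tendsto
        (fun t : ℝ => 1 + (-(t / 2) + δ₂ t 3) * a 0 + (t ^ 3 + δ₂ t 4) * b 0)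
        (𝓝[>] (0:ℝ)) (𝓝 1) := by
      convert hraw using 2
      norm_num
    apply hbig.congr'
    filter_upwards [hIoc] with t ht
    rw [hfB0 t (Set.Ioc_subset_Icc_self ht)]
  have hxB : Filter.Tendsto (fun t => P (curveB t + δ₂ t) 1 / t) (𝓝[>] (0:ℝ))
      (𝓝 (1 / 2 - a 1 / 2)) := by
    have hraw := ((tendsto_const_nhds (x := (1/2:ℝ)).add (dlim _ (hd2 1) 1 (by norm_num))).add
      ((tendsto_const_nhds (x := (-(1/2):ℝ)).add
        (dlim _ (hd2 3) 1 (by norm_num))).mul_const (a 1))).add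
      ((ht2lim.add (dlim _ (hd2 4) 1 (by norm_num))).mul_const (b 1))
    simp only [pow_one] at hraw
    have hbig : Filter.Tendsto
        (fun t : ℝ => (1 / 2 + δ₂ t 1 / t) + (-(1 / 2) + δ₂ t 3 / t) * a 1
          + (t ^ 2 + δ₂ t 4 / t) * b 1)
        (𝓝[>] (0:ℝ)) (𝓝 (1 / 2 - a 1 / 2)) := by
      convert hraw using 2
      ring
    apply hbig.congr'
    filter_upwards [hIoc, self_mem_nhdsWithin] with t ht ht'
    have htne : t ≠ 0 := ne_of_gt (α := ℝ) ht'
    rw [hfB1 t (Set.Ioc_subset_Icc_self ht)]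
    field_simp
    try ring
    try tauto
  have hyB : Filter.Tendsto (fun t => P (curveB t + δ₂ t) 2 / t) (𝓝[>] (0:ℝ))
      (𝓝 (-(a 2) / 2)) := by
    have hraw := ((ht2lim.add (dlim _ (hd2 2) 1 (by norm_num))).add
      ((tendsto_const_nhds (x := (-(1/2):ℝ)).add
        (dlim _ (hd2 3) 1 (by norm_num))).mul_const (a 2))).add
      ((ht2lim.add (dlim _ (hd2 4) 1 (by norm_num))).mul_const (b 2))
    simp only [pow_one] at hraw
    have hbig : Filter.Tendsto
        (fun t : ℝ => (t ^ 2 + δ₂ t 2 / t) + (-(1 / 2) + δ₂ t 3 / t) * a 2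
          + (t ^ 2 + δ₂ t 4 / t) * b 2)
        (𝓝[>] (0:ℝ)) (𝓝 (-(a 2) / 2)) := by
      convert hraw using 2
      ring
    apply hbig.congr'
    filter_upwards [hIoc, self_mem_nhdsWithin] with t ht ht'
    have htne : t ≠ 0 := ne_of_gt (α := ℝ) ht'
    rw [hfB2 t (Set.Ioc_subset_Icc_self ht)]
    field_simp
    try ring
    try tauto
  have ha2nonpos : 0 ≤ -(a 2) / 2 :=
    stage1 _ _ _ (1 / 2 - a 1 / 2) (-(a 2) / 2) hlB hxB hyB hposB
  have ha2 : a 2 = 0 := by linarith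
  -- second stage for curve B
  have hyB2 : Filter.Tendsto (fun t => P (curveB t + δ₂ t) 2 / t ^ 2) (𝓝[>] (0:ℝ)) (𝓝 0) := by
    have hraw := ((tlim.add (dlim _ (hd2 2) 2 (by norm_num))).add
      ((tlim.add (dlim _ (hd2 4) 2 (by norm_num))).mul_const (b 2)))
    have hbig : Filter.Tendsto
        (fun t : ℝ => (t + δ₂ t 2 / t ^ 2) + (t + δ₂ t 4 / t ^ 2) * b 2)
        (𝓝[>] (0:ℝ)) (𝓝 0) := by
      convert hraw using 2
      norm_num
    apply hbig.congr'
    filter_upwards [hIoc, self_mem_nhdsWithin] with t ht ht'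
    have htne : t ≠ 0 := ne_of_gt (α := ℝ) ht'
    rw [hfB2 t (Set.Ioc_subset_Icc_self ht), ha2]
    field_simp
    try ring
    try tauto
  have hXB : 1 / 2 - a 1 / 2 = 0 := stage2 _ _ _ _ hlB hxB hyB2 hposB
  -- curve C
  have hlC : Filter.Tendsto (fun t => P (curveC t + δ₃ t) 0) (𝓝[>] (0:ℝ)) (𝓝 1) := by
    have hraw := (tendsto_const_nhds (x := (1:ℝ)).add
      ((((tlim.div_const 2).neg).add (dlim _ (hd3 3) 0 (by norm_num))).mul_const (a 0))).add
      (((tlim.pow 3).add (dlim _ (hd3 4) 0 (by norm_num))).mul_const (b 0))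
    simp only [pow_zero, div_one] at hraw
    have hbig : Filter.Tendsto
        (fun t : ℝ => 1 + (-(t / 2) + δ₃ t 3) * a 0 + (t ^ 3 + δ₃ t 4) * b 0)
        (𝓝[>] (0:ℝ)) (𝓝 1) := by
      convert hraw using 2
      norm_num
    apply hbig.congr'
    filter_upwards [hIoc] with t ht
    rw [hfC0 t (Set.Ioc_subset_Icc_self ht)]
  have hxC : Filter.Tendsto (fun t => P (curveC t + δ₃ t) 1 / t) (𝓝[>] (0:ℝ))
      (𝓝 (-(1 / 2) - a 1 / 2)) := by
    have hraw := ((tendsto_const_nhds (x := (-(1/2):ℝ)).add (dlim _ (hd3 1) 1 (by norm_num))).add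
      ((tendsto_const_nhds (x := (-(1/2):ℝ)).add
        (dlim _ (hd3 3) 1 (by norm_num))).mul_const (a 1))).add
      ((ht2lim.add (dlim _ (hd3 4) 1 (by norm_num))).mul_const (b 1))
    simp only [pow_one] at hraw
    have hbig : Filter.Tendsto
        (fun t : ℝ => (-(1 / 2) + δ₃ t 1 / t) + (-(1 / 2) + δ₃ t 3 / t) * a 1
          + (t ^ 2 + δ₃ t 4 / t) * b 1)
        (𝓝[>] (0:ℝ)) (𝓝 (-(1 / 2) - a 1 / 2)) := by
      convert hraw using 2
      ring
    apply hbig.congr'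
    filter_upwards [hIoc, self_mem_nhdsWithin] with t ht ht'
    have htne : t ≠ 0 := ne_of_gt (α := ℝ) ht'
    rw [hfC1 t (Set.Ioc_subset_Icc_self ht)]
    field_simp
    try ring
    try tauto
  have hyC2 : Filter.Tendsto (fun t => P (curveC t + δ₃ t) 2 / t ^ 2) (𝓝[>] (0:ℝ)) (𝓝 0) := by
    have hraw := ((tlim.add (dlim _ (hd3 2) 2 (by norm_num))).add
      ((tlim.add (dlim _ (hd3 4) 2 (by norm_num))).mul_const (b 2)))
    have hbig : Filter.Tendsto
        (fun t : ℝ => (t + δ₃ t 2 / t ^ 2) + (t + δ₃ t 4 / t ^ 2) * b 2)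
        (𝓝[>] (0:ℝ)) (𝓝 0) := by
      convert hraw using 2
      norm_num
    apply hbig.congr'
    filter_upwards [hIoc, self_mem_nhdsWithin] with t ht ht'
    have htne : t ≠ 0 := ne_of_gt (α := ℝ) ht'
    rw [hfC2 t (Set.Ioc_subset_Icc_self ht), ha2]
    field_simp
    try ring
    try tauto
  have hXC : -(1 / 2) - a 1 / 2 = 0 := stage2 _ _ _ _ hlC hxC hyC2 hposC
  linarith
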